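/- Let n be a positive integer, let n − 1 < α < n, let X > 0 and let y : [0,X] → ℝ be n times continuously differentiable. Then for every x ∈ [0,X], J^α(ᶜD^α y)(x) = y(x) − Σ_{k=0}^{n−1} y^{(k)}(0) x^k / k!; explicitly, (1/Γ(α)) ∫₀ˣ (x − s)^{α−1} [ (1/Γ(n−α)) ∫₀ˢ (s − r)^{n−α−1} y^{(n)}(r) dr ] ds = y(x) − Σ_{k=0}^{n−1} y^{(k)}(0) x^k / k!. -/

import Mathlib

open MeasureTheory intervalIntegral Set


lemma real_beta_scaled {a b c d : ℝ} (ha : 0 < a) (hb : 0 < b) (hcd : c < d) :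
    ∫ s in c..d, (d - s) ^ (a - 1) * (s - c) ^ (b - 1) =
      (d - c) ^ (a + b - 1) * (Real.Gamma a * Real.Gamma b / Real.Gamma (a + b)) := by
  have hdc : 0 < d - c := sub_pos.mpr hcd
  -- shift
  have h1 : (∫ s in c..d, (d - s) ^ (a - 1) * (s - c) ^ (b - 1)) =
      ∫ u in (0:ℝ)..(d - c), u ^ (b - 1) * (d - c - u) ^ (a - 1) := by
    have := intervalIntegral.integral_comp_sub_right
      (fun u => u ^ (b - 1) * (d - c - u) ^ (a - 1)) c (a := c) (b := d)
    simp only [sub_self] at this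
    rw [← this]
    apply intervalIntegral.integral_congr
    intro s hs
    ring_nf
  rw [h1]
  -- transfer to ℂ
  have key := Complex.betaIntegral_scaled (b : ℂ) (a : ℂ) hdc
  have h2 : ((∫ u in (0:ℝ)..(d - c), u ^ (b - 1) * (d - c - u) ^ (a - 1) : ℝ) : ℂ) =
      ∫ u in (0:ℝ)..(d - c), (u : ℂ) ^ ((b : ℂ) - 1) * ((d - c : ℝ) - (u : ℝ) : ℂ) ^ ((a : ℂ) - 1) := by
    rw [← intervalIntegral.integral_ofReal]
    apply intervalIntegral.integral_congr
    intro u hu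
    rw [Set.uIcc_of_le hdc.le] at hu
    simp only [Complex.ofReal_mul]
    rw [Complex.ofReal_cpow hu.1, Complex.ofReal_cpow (by linarith [hu.2] : (0:ℝ) ≤ d - c - u)]
    push_cast
    ring_nf
  have hbeta : Complex.betaIntegral (b : ℂ) (a : ℂ) =
      ((Real.Gamma a * Real.Gamma b / Real.Gamma (a + b) : ℝ) : ℂ) := by
    have hg := Complex.Gamma_mul_Gamma_eq_betaIntegral
      (s := (b:ℂ)) (t := (a:ℂ)) (by simpa using hb) (by simpa using ha)
    rw [show ((b:ℂ) + a) = ((b + a : ℝ) : ℂ) by push_cast; ring, Complex.Gamma_ofReal,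
      Complex.Gamma_ofReal, Complex.Gamma_ofReal] at hg
    have hne : ((Real.Gamma (b + a) : ℝ) : ℂ) ≠ 0 := by
      exact_mod_cast (Real.Gamma_pos_of_pos (by linarith : (0:ℝ) < b + a)).ne'
    rw [show a + b = b + a from add_comm a b]
    push_cast
    rw [eq_div_iff hne]
    linear_combination -hg
  rw [← Complex.ofReal_inj, h2, key, hbeta, Complex.ofReal_mul,
    Complex.ofReal_cpow hdc.le]
  push_cast
  rw [show (b:ℂ) + a - 1 = (a:ℂ) + b - 1 by ring]


lemma rpow_shift_integrable {b : ℝ} (hb : 0 < b) (s : ℝ) :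
    IntervalIntegrable (fun r => (s - r) ^ (b - 1)) volume 0 s := by
  have h := (intervalIntegrable_rpow' (show (-1:ℝ) < b - 1 by linarith)
    (a := 0) (b := s)).comp_sub_left s
  simpa using h.symm

lemma rpow_shift_integral {b : ℝ} (hb : 0 < b) {s : ℝ} (hs : 0 ≤ s) :
    (∫ r in (0:ℝ)..s, (s - r) ^ (b - 1)) = s ^ b / b := by
  rw [intervalIntegral.integral_comp_sub_left (fun u => u ^ (b - 1)) s]
  simp only [sub_self, sub_zero]
  rw [integral_rpow (Or.inl (by linarith))]
  rw [sub_add_cancel, Real.zero_rpow hb.ne']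
  ring

lemma fubini_kernel {a b x : ℝ} (ha : 0 < a) (hb : 0 < b) (hx : 0 < x)
    {g : ℝ → ℝ} (hg : Continuous g) :
    (∫ s in (0:ℝ)..x, (x - s) ^ (a - 1) * ∫ r in (0:ℝ)..s, (s - r) ^ (b - 1) * g r) =
    ∫ r in (0:ℝ)..x, (∫ s in r..x, (x - s) ^ (a - 1) * (s - r) ^ (b - 1)) * g r := by
  obtain ⟨M, hM⟩ := (isCompact_Icc (a := (0:ℝ)) (b := x)).exists_bound_of_continuousOn
    hg.continuousOn
  set M' := max M 0 with hM'def
  have hM'0 : 0 ≤ M' := le_max_right _ _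
  have hM' : ∀ r ∈ Icc (0:ℝ) x, |g r| ≤ M' := fun r hr =>
    (hM r hr).trans (le_max_left _ _)
  set μ := volume.restrict (Ioc (0:ℝ) x) with hμdef
  set K : ℝ × ℝ → ℝ := fun p => (x - p.1) ^ (a-1) * ((p.1 - p.2) ^ (b-1) * g p.2) with hKdef
  set F : ℝ × ℝ → ℝ := {p : ℝ × ℝ | p.2 < p.1}.indicator K with hFdef
  have hKm : Measurable K :=
    (((measurable_const.sub measurable_fst).pow measurable_const).mul
      (((measurable_fst.sub measurable_snd).pow measurable_const).mul
        (hg.measurable.comp measurable_snd)))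
  have hFm : Measurable F :=
    hKm.indicator (measurableSet_lt measurable_snd measurable_fst)
  -- sections in r
  have hsec : ∀ s : ℝ, (fun r => F (s, r)) =
      (Iio s).indicator (fun r => (x - s) ^ (a-1) * ((s - r) ^ (b-1) * g r)) := by
    intro s
    funext r
    by_cases h : r < s <;>
      simp [hFdef, hKdef, Set.indicator, h]
  -- integrability of the r-section restricted
  have hφint : ∀ s : ℝ, IntervalIntegrable
      (fun r => (x - s) ^ (a-1) * ((s - r) ^ (b-1) * g r)) volume 0 s :=
    fun s => ((rpow_shift_integrable hb s).mul_continuousOn hg.continuousOn).const_mul _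
  have hinter : ∀ s ∈ Ioc (0:ℝ) x, Iio s ∩ Ioc (0:ℝ) x = Ioo 0 s := by
    intro s hs
    ext r
    simp only [mem_inter_iff, mem_Iio, mem_Ioc, mem_Ioo]
    constructor
    · rintro ⟨h1, h2, h3⟩; exact ⟨h2, h1⟩
    · rintro ⟨h1, h2⟩; exact ⟨h2, h1, by linarith [hs.2]⟩
  have hsecInt : ∀ s ∈ Ioc (0:ℝ) x, Integrable (fun r => F (s, r)) μ := by
    intro s hs
    rw [hsec s, hμdef, integrable_indicator_iff measurableSet_Iio]
    rw [IntegrableOn, Measure.restrict_restrict measurableSet_Iio, hinter s hs]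
    exact (((hφint s).1.mono_set Ioo_subset_Ioc_self) :)
  -- norm integral bound
  set C : ℝ := M' * (x ^ b / b) with hCdef
  have hC0 : 0 ≤ C := by
    apply mul_nonneg hM'0
    positivity
  have hbound : ∀ s ∈ Ioc (0:ℝ) x, (∫ r, ‖F (s, r)‖ ∂μ) ≤ C * (x - s) ^ (a-1) := by
    intro s hs
    have hxs : (0:ℝ) ≤ x - s := by linarith [hs.2]
    have h1 : (fun r => ‖F (s, r)‖) =
        (Iio s).indicator (fun r => ‖(x - s) ^ (a-1) * ((s - r) ^ (b-1) * g r)‖) := by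
      rw [show (fun r => ‖F (s, r)‖) = fun r => ‖(fun r' => F (s, r')) r‖ from rfl, hsec s]
      funext r
      rw [norm_indicator_eq_indicator_norm]
    rw [h1, MeasureTheory.integral_indicator measurableSet_Iio, hμdef,
      Measure.restrict_restrict measurableSet_Iio, hinter s hs]
    have h2 : (∫ r in Ioo (0:ℝ) s, ‖(x - s) ^ (a-1) * ((s - r) ^ (b-1) * g r)‖) ≤
        ∫ r in Ioo (0:ℝ) s, (x - s) ^ (a-1) * ((s - r) ^ (b-1) * M') := by
      apply setIntegral_mono_on
      · exact (((hφint s).1.mono_set Ioo_subset_Ioc_self) :).norm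
      · exact ((((rpow_shift_integrable hb s).mul_const M').const_mul
          ((x - s) ^ (a-1))).1.mono_set Ioo_subset_Ioc_self :)
      · exact measurableSet_Ioo
      · intro r hr
        have hsr : (0:ℝ) ≤ s - r := by linarith [hr.2]
        rw [norm_mul, norm_mul]
        rw [Real.norm_of_nonneg (Real.rpow_nonneg hxs _),
          Real.norm_of_nonneg (Real.rpow_nonneg hsr _)]
        apply mul_le_mul_of_nonneg_left _ (Real.rpow_nonneg hxs _)
        apply mul_le_mul_of_nonneg_left _ (Real.rpow_nonneg hsr _)
        exact (hM' r ⟨hr.1.le, by linarith [hr.2, hs.2]⟩)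
    refine h2.trans ?_
    rw [← integral_Ioc_eq_integral_Ioo, ← intervalIntegral.integral_of_le hs.1.le]
    rw [intervalIntegral.integral_const_mul, intervalIntegral.integral_mul_const,
      rpow_shift_integral hb hs.1.le]
    have hsb : s ^ b ≤ x ^ b := Real.rpow_le_rpow hs.1.le hs.2 hb.le
    have hstep : (x - s) ^ (a-1) * (s ^ b / b * M') ≤ (x - s) ^ (a-1) * (x ^ b / b * M') := by
      gcongr
    exact hstep.trans_eq (by rw [hCdef]; ring)
  -- integrability of F on the product
  have hg0 : Integrable (fun s => C * (x - s) ^ (a-1)) μ := by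
    have := ((rpow_shift_integrable ha x).const_mul C).1
    rw [hμdef]
    exact this
  have hFaem : AEStronglyMeasurable F (μ.prod μ) :=
    hFm.aestronglyMeasurable
  have hnormInt : Integrable (fun s => ∫ r, ‖F (s, r)‖ ∂μ) μ := by
    apply Integrable.mono' hg0 (hFaem.norm.integral_prod_right')
    rw [hμdef]
    filter_upwards [ae_restrict_mem measurableSet_Ioc] with s hs
    rw [Real.norm_of_nonneg (integral_nonneg fun r => norm_nonneg _)]
    exact hbound s hs
  have hIntF : Integrable F (μ.prod μ) := by
    rw [integrable_prod_iff hFaem]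
    constructor
    · rw [hμdef]
      filter_upwards [ae_restrict_mem measurableSet_Ioc] with s hs
      exact hsecInt s hs
    · exact hnormInt
  have hswap : (∫ s, ∫ r, F (s, r) ∂μ ∂μ) = ∫ r, ∫ s, F (s, r) ∂μ ∂μ :=
    MeasureTheory.integral_integral_swap hIntF
  -- identify LHS
  have hLHS : (∫ s in (0:ℝ)..x, (x - s) ^ (a - 1) * ∫ r in (0:ℝ)..s, (s - r) ^ (b - 1) * g r) =
      ∫ s, ∫ r, F (s, r) ∂μ ∂μ := by
    rw [intervalIntegral.integral_of_le hx.le, hμdef]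
    apply setIntegral_congr_fun measurableSet_Ioc
    intro s hs
    dsimp only
    have h4 : (∫ r in Ioc (0:ℝ) x, F (s, r)) =
        ∫ r in (0:ℝ)..s, (x - s) ^ (a-1) * ((s - r) ^ (b-1) * g r) := by
      have h5 : (∫ r in Ioc (0:ℝ) x, F (s, r)) =
          ∫ r in Ioc (0:ℝ) x, (Iio s).indicator
            (fun r => (x - s) ^ (a-1) * ((s - r) ^ (b-1) * g r)) r := by
        congr 1
      rw [h5, MeasureTheory.setIntegral_indicator measurableSet_Iio,
        inter_comm, hinter s hs, ← integral_Ioc_eq_integral_Ioo,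
        ← intervalIntegral.integral_of_le hs.1.le]
    rw [h4, intervalIntegral.integral_const_mul]
  -- identify RHS
  have hsec2 : ∀ r : ℝ, (fun s => F (s, r)) =
      (Ioi r).indicator (fun s => (x - s) ^ (a-1) * ((s - r) ^ (b-1) * g r)) := by
    intro r
    funext s
    by_cases h : r < s <;>
      simp [hFdef, hKdef, Set.indicator, h]
  have hinter2 : ∀ r ∈ Ioc (0:ℝ) x, Ioi r ∩ Ioc (0:ℝ) x = Ioc r x := by
    intro r hr
    ext s
    simp only [mem_inter_iff, mem_Ioi, mem_Ioc]
    constructor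
    · rintro ⟨h1, h2, h3⟩; exact ⟨h1, h3⟩
    · rintro ⟨h1, h2⟩; exact ⟨h1, by linarith [hr.1], h2⟩
  have hRHS : (∫ r, ∫ s, F (s, r) ∂μ ∂μ) =
      ∫ r in (0:ℝ)..x, (∫ s in r..x, (x - s) ^ (a - 1) * (s - r) ^ (b - 1)) * g r := by
    rw [intervalIntegral.integral_of_le hx.le, hμdef]
    apply setIntegral_congr_fun measurableSet_Ioc
    intro r hr
    dsimp only
    have h3 : (∫ s in Ioc (0:ℝ) x, F (s, r)) =
        ∫ s in r..x, (x - s) ^ (a-1) * ((s - r) ^ (b-1) * g r) := by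
      have h5 : (∫ s in Ioc (0:ℝ) x, F (s, r)) =
          ∫ s in Ioc (0:ℝ) x, (Ioi r).indicator
            (fun s => (x - s) ^ (a-1) * ((s - r) ^ (b-1) * g r)) s := by
        congr 1
      rw [h5, MeasureTheory.setIntegral_indicator measurableSet_Ioi,
        inter_comm, hinter2 r hr, ← intervalIntegral.integral_of_le hr.2]
    rw [h3, ← intervalIntegral.integral_mul_const]
    apply intervalIntegral.integral_congr
    intro s hs
    ring
  rw [hLHS, hswap, hRHS]


lemma taylor_int {X : ℝ} (hX : 0 < X) {n : ℕ} {y : ℝ → ℝ}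
    (hy : ContDiffOn ℝ n y (Set.Icc 0 X)) {x : ℝ} (hx0 : 0 < x) (hxX : x ≤ X) :
    ∀ t : ℕ, t + 1 ≤ n →
      y x = (∑ k ∈ Finset.range (t+1),
          iteratedDerivWithin k y (Set.Icc 0 X) 0 * x ^ k / (k.factorial : ℝ)) +
        (1 / (t.factorial : ℝ)) *
          ∫ r in (0:ℝ)..x, (x - r) ^ t * iteratedDerivWithin (t+1) y (Set.Icc 0 X) r := by
  have hu : UniqueDiffOn ℝ (Set.Icc (0:ℝ) X) := uniqueDiffOn_Icc hX
  have hcont : ∀ k, k ≤ n → ContinuousOn (iteratedDerivWithin k y (Set.Icc 0 X)) (Set.Icc 0 X) := fun k hk =>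
    hy.continuousOn_iteratedDerivWithin (by exact_mod_cast hk) hu
  have key : ∀ k, k < n → ∀ t ∈ Ioo (0:ℝ) X, HasDerivAt (iteratedDerivWithin k y (Set.Icc 0 X)) (iteratedDerivWithin (k+1) y (Set.Icc 0 X) t) t := by
    intro k hk t ht
    have hnhds : Set.Icc (0:ℝ) X ∈ nhds t := Icc_mem_nhds ht.1 ht.2
    have hdiff : DifferentiableWithinAt ℝ (iteratedDerivWithin k y (Set.Icc 0 X)) (Set.Icc 0 X) t :=
      (hy.differentiableOn_iteratedDerivWithin (by exact_mod_cast hk) hu) t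
        (Ioo_subset_Icc_self ht)
    have hda : DifferentiableAt ℝ (iteratedDerivWithin k y (Set.Icc 0 X)) t := hdiff.differentiableAt hnhds
    have heq : iteratedDerivWithin (k+1) y (Set.Icc 0 X) t
        = deriv (iteratedDerivWithin k y (Set.Icc 0 X)) t := by
      rw [iteratedDerivWithin_succ,
        derivWithin_of_mem_nhds hnhds]
    rw [heq]
    exact hda.hasDerivAt
  -- FTC identity for each m with 1 ≤ m ≤ n
  have ftc : ∀ m : ℕ, m + 2 ≤ n →
      ((m+1 : ℕ) : ℝ) * ∫ r in (0:ℝ)..x, (x - r) ^ m * iteratedDerivWithin (m+1) y (Set.Icc 0 X) r =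
        x ^ (m+1) * iteratedDerivWithin (m+1) y (Set.Icc 0 X) 0 + ∫ r in (0:ℝ)..x, (x - r) ^ (m+1) * iteratedDerivWithin (m+2) y (Set.Icc 0 X) r := by
    intro m hm
    set G : ℝ → ℝ := fun r => (x - r) ^ (m+1) * iteratedDerivWithin (m+1) y (Set.Icc 0 X) r with hGdef
    set G' : ℝ → ℝ := fun r =>
      (((m+1 : ℕ) : ℝ) * (x - r) ^ m * (-1)) * iteratedDerivWithin (m+1) y (Set.Icc 0 X) r + (x - r) ^ (m+1) * iteratedDerivWithin (m+2) y (Set.Icc 0 X) r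
      with hG'def
    have hIccsub : Set.Icc (0:ℝ) x ⊆ Set.Icc 0 X := Set.Icc_subset_Icc le_rfl hxX
    have hGcont : ContinuousOn G (Set.Icc 0 x) := by
      apply ContinuousOn.mul
      · exact (continuous_const.sub continuous_id).pow _ |>.continuousOn
      · exact (hcont (m+1) (by omega)).mono hIccsub
    have hG'deriv : ∀ t ∈ Ioo (0:ℝ) x, HasDerivWithinAt G (G' t) (Ioi t) t := by
      intro t ht
      have ht' : t ∈ Ioo (0:ℝ) X := ⟨ht.1, lt_of_lt_of_le ht.2 hxX⟩
      have h1 : HasDerivAt (fun r => (x - r) ^ (m+1))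
          (((m+1 : ℕ) : ℝ) * (x - t) ^ m * (-1)) t := by
        have := ((hasDerivAt_id t).const_sub x).fun_pow (m+1)
        simpa using this
      have h2 := key (m+1) (by omega) t ht'
      exact ((h1.mul h2).hasDerivWithinAt :)
    have hG'int : IntervalIntegrable G' volume 0 x := by
      apply ContinuousOn.intervalIntegrable
      rw [uIcc_of_le hx0.le]
      apply ContinuousOn.add
      · exact (((continuous_const.mul ((continuous_const.sub continuous_id).pow m)).mul
          continuous_const).continuousOn).mul ((hcont (m+1) (by omega)).mono hIccsub)
      · exact ((continuous_const.sub continuous_id).pow _ |>.continuousOn).mul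
          ((hcont (m+2) (by omega)).mono hIccsub)
    have hftc := intervalIntegral.integral_eq_sub_of_hasDeriv_right_of_le hx0.le
      hGcont hG'deriv hG'int
    have hGx : G x = 0 := by simp [hGdef]
    have hG0 : G 0 = x ^ (m+1) * iteratedDerivWithin (m+1) y (Set.Icc 0 X) 0 := by simp [hGdef]
    rw [hGx, hG0] at hftc
    have hsplit : (∫ r in (0:ℝ)..x, G' r) =
        (∫ r in (0:ℝ)..x, (((m+1 : ℕ) : ℝ) * (x - r) ^ m * (-1)) * iteratedDerivWithin (m+1) y (Set.Icc 0 X) r) +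
        ∫ r in (0:ℝ)..x, (x - r) ^ (m+1) * iteratedDerivWithin (m+2) y (Set.Icc 0 X) r := by
      apply intervalIntegral.integral_add
      · apply ContinuousOn.intervalIntegrable
        rw [uIcc_of_le hx0.le]
        exact (((continuous_const.mul ((continuous_const.sub continuous_id).pow m)).mul
          continuous_const).continuousOn).mul ((hcont (m+1) (by omega)).mono hIccsub)
      · apply ContinuousOn.intervalIntegrable
        rw [uIcc_of_le hx0.le]
        exact ((continuous_const.sub continuous_id).pow _ |>.continuousOn).mul
          ((hcont (m+2) (by omega)).mono hIccsub)
    have hpull : (∫ r in (0:ℝ)..x, (((m+1 : ℕ) : ℝ) * (x - r) ^ m * (-1)) * iteratedDerivWithin (m+1) y (Set.Icc 0 X) r) =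
        (-((m+1 : ℕ) : ℝ)) * ∫ r in (0:ℝ)..x, (x - r) ^ m * iteratedDerivWithin (m+1) y (Set.Icc 0 X) r := by
      rw [← intervalIntegral.integral_const_mul]
      apply intervalIntegral.integral_congr
      intro r hr
      ring
    rw [hsplit, hpull] at hftc
    linarith [hftc]
  -- induction
  intro t
  induction t with
  | zero =>
    intro ht
    have hycont : ContinuousOn y (Set.Icc 0 x) := by
      have := hy.continuousOn
      exact this.mono (Set.Icc_subset_Icc le_rfl hxX)
    have hderiv : ∀ s ∈ Ioo (0:ℝ) x, HasDerivWithinAt y (iteratedDerivWithin 1 y (Set.Icc 0 X) s) (Ioi s) s := by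
      intro s hs
      have hs' : s ∈ Ioo (0:ℝ) X := ⟨hs.1, lt_of_lt_of_le hs.2 hxX⟩
      have := key 0 (by omega) s hs'
      simp only [iteratedDerivWithin_zero] at this
      exact this.hasDerivWithinAt
    have hint : IntervalIntegrable (iteratedDerivWithin 1 y (Set.Icc 0 X)) volume 0 x := by
      apply ContinuousOn.intervalIntegrable
      rw [uIcc_of_le hx0.le]
      exact (hcont 1 ht).mono (Set.Icc_subset_Icc le_rfl hxX)
    have := intervalIntegral.integral_eq_sub_of_hasDeriv_right_of_le hx0.le
      hycont hderiv hint
    simp only [Finset.range_one, Finset.sum_singleton, pow_zero, Nat.factorial_zero,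
      Nat.cast_one, mul_one, div_one, one_mul, iteratedDerivWithin_zero]
    rw [this, Finset.sum_range_one]
    simp only [iteratedDerivWithin_zero, pow_zero, Nat.factorial_zero, Nat.cast_one,
      mul_one, div_one]
    ring
  | succ t ih =>
    intro ht
    have ih' := ih (by omega)
    have hftc := ftc t (by omega)
    have hfact : ((t+1).factorial : ℝ) = (((t:ℝ)) + 1) * (t.factorial : ℝ) := by
      rw [Nat.factorial_succ]
      push_cast
      ring
    have htne : ((t.factorial : ℝ)) ≠ 0 := Nat.cast_ne_zero.mpr t.factorial_ne_zero
    have ht1ne : ((t:ℝ) + 1) ≠ 0 := by positivity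
    push_cast at hftc
    have hstep : (1 / (t.factorial : ℝ)) *
          (∫ r in (0:ℝ)..x, (x - r) ^ t * iteratedDerivWithin (t+1) y (Set.Icc 0 X) r) =
        iteratedDerivWithin (t+1) y (Set.Icc 0 X) 0 * x ^ (t+1) / ((t+1).factorial : ℝ) +
          (1 / ((t+1).factorial : ℝ)) *
            ∫ r in (0:ℝ)..x, (x - r) ^ (t+1) * iteratedDerivWithin (t+2) y (Set.Icc 0 X) r := by
      rw [hfact]
      field_simp
      linear_combination hftc
    rw [Finset.sum_range_succ, ih', hstep]
    have : t + 1 + 1 = t + 2 := rfl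
    rw [this]
    ring


/-- For `n − 1 < α < n`, `X > 0` and `y` `n` times continuously
differentiable on `[0,X]`, the composition of the Riemann–Liouville integral of order
`α` with the Caputo derivative of order `α` satisfies, for every `x ∈ [0,X]`,
`J^α (ᶜD^α y)(x) = y(x) − Σ_{k=0}^{n−1} y⁽ᵏ⁾(0) xᵏ / k!`. -/
theorem stmt_14 (n : ℕ) (hn : 0 < n) (α X : ℝ)
    (hα1 : (n : ℝ) - 1 < α) (hα2 : α < (n : ℝ)) (hX : 0 < X)
    (y : ℝ → ℝ) (hy : ContDiffOn ℝ n y (Set.Icc 0 X))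
    (x : ℝ) (hx : x ∈ Set.Icc (0:ℝ) X) :
    (1 / Real.Gamma α) * (∫ s in (0:ℝ)..x, (x - s) ^ (α - 1) *
        ((1 / Real.Gamma ((n : ℝ) - α)) * ∫ r in (0:ℝ)..s,
          (s - r) ^ ((n : ℝ) - α - 1) * iteratedDerivWithin n y (Set.Icc 0 X) r)) =
      y x - ∑ k ∈ Finset.range n,
        iteratedDerivWithin k y (Set.Icc 0 X) 0 * x ^ k / (k.factorial : ℝ) := by
  obtain ⟨m, rfl⟩ : ∃ m, n = m + 1 := ⟨n - 1, (Nat.succ_pred_eq_of_pos hn).symm⟩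
  have ha : 0 < α := by
    have : ((m+1 : ℕ) : ℝ) - 1 = (m : ℝ) := by push_cast; ring
    rw [this] at hα1
    have : (0:ℝ) ≤ m := Nat.cast_nonneg m
    linarith
  have hb : 0 < ((m+1 : ℕ) : ℝ) - α := by linarith
  set b : ℝ := ((m+1 : ℕ) : ℝ) - α with hbdef
  have hGa : 0 < Real.Gamma α := Real.Gamma_pos_of_pos ha
  have hGb : 0 < Real.Gamma b := Real.Gamma_pos_of_pos hb
  have hGn : Real.Gamma (α + b) = (m.factorial : ℝ) := by
    have : α + b = (m : ℝ) + 1 := by rw [hbdef]; push_cast; ring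
    rw [this, Real.Gamma_nat_eq_factorial]
  -- continuity of the top derivative and its extension
  have hu : UniqueDiffOn ℝ (Set.Icc (0:ℝ) X) := uniqueDiffOn_Icc hX
  have hconts : ContinuousOn (iteratedDerivWithin (m+1) y (Set.Icc 0 X)) (Set.Icc 0 X) :=
    hy.continuousOn_iteratedDerivWithin (by exact_mod_cast le_rfl) hu
  obtain ⟨G, hG⟩ := ContinuousMap.exists_restrict_eq
    (isClosed_Icc : IsClosed (Set.Icc (0:ℝ) X))
    ⟨_, hconts.restrict⟩
  have hGf : ∀ t ∈ Set.Icc (0:ℝ) X, G t = iteratedDerivWithin (m+1) y (Set.Icc 0 X) t := by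
    intro t ht
    have := DFunLike.congr_fun hG (⟨t, ht⟩ : Set.Icc (0:ℝ) X)
    simpa using this
  rcases eq_or_lt_of_le hx.1 with hx0 | hx0
  · -- x = 0
    rw [← hx0]
    simp only [intervalIntegral.integral_same, mul_zero]
    have hsum : (∑ k ∈ Finset.range (m+1),
        iteratedDerivWithin k y (Set.Icc 0 X) 0 * (0:ℝ) ^ k / (k.factorial : ℝ)) = y 0 := by
      rw [Finset.sum_eq_single_of_mem 0 (Finset.mem_range.mpr (by omega))]
      · simp [iteratedDerivWithin_zero]
      · intro k hk hkne
        rw [zero_pow hkne]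
        ring
    rw [hsum]
    ring
  · -- 0 < x
    have hxX : x ≤ X := hx.2
    -- replace the inner function by the extension G
    have h1 : (∫ s in (0:ℝ)..x, (x - s) ^ (α - 1) *
          ((1 / Real.Gamma b) * ∫ r in (0:ℝ)..s,
            (s - r) ^ (b - 1) * iteratedDerivWithin (m+1) y (Set.Icc 0 X) r)) =
        (1 / Real.Gamma b) * ∫ s in (0:ℝ)..x, (x - s) ^ (α - 1) *
          ∫ r in (0:ℝ)..s, (s - r) ^ (b - 1) * G r := by
      rw [← intervalIntegral.integral_const_mul]
      apply intervalIntegral.integral_congr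
      intro s hs
      rw [Set.uIcc_of_le hx0.le] at hs
      have hinner : (∫ r in (0:ℝ)..s, (s - r) ^ (b - 1) *
            iteratedDerivWithin (m+1) y (Set.Icc 0 X) r) =
          ∫ r in (0:ℝ)..s, (s - r) ^ (b - 1) * G r := by
        apply intervalIntegral.integral_congr
        intro r hr
        rw [Set.uIcc_of_le hs.1] at hr
        dsimp only
        rw [hGf r ⟨hr.1, le_trans hr.2 (le_trans hs.2 hxX)⟩]
      dsimp only
      rw [hinner]
      ring
    rw [h1]
    rw [fubini_kernel ha hb hx0 G.continuous]
    -- evaluate the inner kernel integral via the beta function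
    have h2 : (∫ r in (0:ℝ)..x, (∫ s in r..x, (x - s) ^ (α - 1) * (s - r) ^ (b - 1)) * G r) =
        ∫ r in (0:ℝ)..x, (Real.Gamma α * Real.Gamma b / (m.factorial : ℝ)) *
          ((x - r) ^ m * G r) := by
      apply intervalIntegral.integral_congr_ae
      rw [MeasureTheory.ae_iff]
      refine MeasureTheory.measure_mono_null (t := {(x : ℝ)}) ?_ (MeasureTheory.measure_singleton x)
      · intro r hr
        simp only [Set.mem_setOf_eq] at hr
        push_neg at hr
        obtain ⟨hruIoc, hne⟩ := hr
        by_contra hrx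
        apply hne
        have hrx' : r ≠ x := hrx
        rw [Set.uIoc_of_le hx0.le] at hruIoc
        have hrlt : r < x := lt_of_le_of_ne hruIoc.2 hrx'
        rw [real_beta_scaled ha hb hrlt]
        rw [← hGn]
        have hxr : (x - r) ^ (α + b - 1) = (x - r) ^ m := by
          have hab : α + b - 1 = ((m : ℕ) : ℝ) := by rw [hbdef]; push_cast; ring
          rw [hab, Real.rpow_natCast]
        rw [hxr]
        ring
    rw [h2, intervalIntegral.integral_const_mul]
    -- switch back from G to the iterated derivative
    have h3 : (∫ r in (0:ℝ)..x, (x - r) ^ m * G r) =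
        ∫ r in (0:ℝ)..x, (x - r) ^ m * iteratedDerivWithin (m+1) y (Set.Icc 0 X) r := by
      apply intervalIntegral.integral_congr
      intro r hr
      rw [Set.uIcc_of_le hx0.le] at hr
      dsimp only
      rw [hGf r ⟨hr.1, le_trans hr.2 hxX⟩]
    rw [h3]
    -- Taylor's theorem
    have htay := taylor_int hX hy hx0 hxX m (le_rfl)
    rw [htay]
    have hGa' : Real.Gamma α ≠ 0 := hGa.ne'
    have hGb' : Real.Gamma b ≠ 0 := hGb.ne'
    have hmf : ((m.factorial : ℝ)) ≠ 0 := Nat.cast_ne_zero.mpr m.factorial_ne_zero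
    field_simp
    ring
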